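/- (Growth bounds for linear-quadratic tilts.) Let μ be a probability measure on ℝ and d0 > 0, and suppose there exist ε ∈ (0, d0/2) and C > 0 such that for all d ∈ (d0 − ε, d0 + ε): the mean of B_{0,d}(μ) is bounded in absolute value by C, and ‖B_{t,d}(μ)‖_{ψ2} ≤ C(1 + |t|) for all t ∈ ℝ. Then: (i) there is a constant K (depending only on C, d0, ε) such that log ∫ exp(t·b − d·b²/2) dμ(b) ≤ K(1 + |t|⁴) for all t ∈ ℝ and all d ∈ (d0 − ε, d0 + ε); and (ii) for every r > 0 there is a constant K_r such that ∫ |b|^r dB_{t,d}(μ)(b) ≤ K_r(1 + |t|^{3r}) for all t ∈ ℝ and all d ∈ (d0 − ε, d0 + ε). -/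

import Mathlib

open MeasureTheory ProbabilityTheory Real Filter
open scoped ENNReal NNReal

noncomputable section

/-- `SubGaussianNormLE ρ K` : the MGF of `ρ` around its mean is bounded by `exp (K² t²/2)`;
equivalently, the sub-Gaussian norm of a random variable with law `ρ` is at most `K`. -/
def SubGaussianNormLE (ρ : Measure ℝ) (K : ℝ) : Prop :=
  ∀ t : ℝ, ∫ x, Real.exp (t * (x - ∫ y, y ∂ρ)) ∂ρ ≤ Real.exp (K ^ 2 * t ^ 2 / 2)

/-- The linear-quadratic tilt `B_{t,d}(μ)`: probability measure with density w.r.t. `μ`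
proportional to `b ↦ exp (t b − d b²/2)`. -/
def tiltLQ (μ : Measure ℝ) (t d : ℝ) : Measure ℝ :=
  ((μ.withDensity fun b => ENNReal.ofReal (Real.exp (t * b - d * b ^ 2 / 2))) Set.univ)⁻¹ •
    μ.withDensity fun b => ENNReal.ofReal (Real.exp (t * b - d * b ^ 2 / 2))

lemma exponent_le (t d b : ℝ) (hd : 0 < d) : t * b - d * b ^ 2 / 2 ≤ t ^ 2 / (2 * d) := by
  rw [le_div_iff₀ (by positivity)]
  nlinarith [sq_nonneg (t - d * b)]

lemma meas_g (t d : ℝ) : Measurable fun b : ℝ => Real.exp (t * b - d * b ^ 2 / 2) := by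
  fun_prop

lemma integrable_g (μ : Measure ℝ) [IsFiniteMeasure μ] (t d : ℝ) (hd : 0 < d) :
    Integrable (fun b => Real.exp (t * b - d * b ^ 2 / 2)) μ := by
  refine (integrable_const (Real.exp (t ^ 2 / (2 * d)))).mono'
    (meas_g t d).aestronglyMeasurable ?_
  filter_upwards with b
  rw [Real.norm_eq_abs, abs_of_pos (Real.exp_pos _)]
  exact Real.exp_le_exp.mpr (exponent_le t d b hd)

lemma Z_pos (μ : Measure ℝ) [IsProbabilityMeasure μ] (t d : ℝ) (hd : 0 < d) :
    0 < ∫ b, Real.exp (t * b - d * b ^ 2 / 2) ∂μ := by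
  rw [integral_pos_iff_support_of_nonneg (fun b => (Real.exp_pos _).le) (integrable_g μ t d hd)]
  have : (Function.support fun b : ℝ => Real.exp (t * b - d * b ^ 2 / 2)) = Set.univ := by
    ext b; simp [Function.mem_support, (Real.exp_pos _).ne']
  rw [this]; simp

lemma Z_le (μ : Measure ℝ) [IsProbabilityMeasure μ] (t d : ℝ) (hd : 0 < d) :
    ∫ b, Real.exp (t * b - d * b ^ 2 / 2) ∂μ ≤ Real.exp (t ^ 2 / (2 * d)) := by
  calc ∫ b, Real.exp (t * b - d * b ^ 2 / 2) ∂μ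
      ≤ ∫ _b, Real.exp (t ^ 2 / (2 * d)) ∂μ := by
        refine integral_mono (integrable_g μ t d hd) (integrable_const _) fun b => ?_
        exact Real.exp_le_exp.mpr (exponent_le t d b hd)
    _ = Real.exp (t ^ 2 / (2 * d)) := by simp

lemma mass_eq (μ : Measure ℝ) [IsProbabilityMeasure μ] (t d : ℝ) (hd : 0 < d) :
    (μ.withDensity fun b => ENNReal.ofReal (Real.exp (t * b - d * b ^ 2 / 2))) Set.univ
      = ENNReal.ofReal (∫ b, Real.exp (t * b - d * b ^ 2 / 2) ∂μ) := by
  rw [withDensity_apply _ MeasurableSet.univ, setLIntegral_univ,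
    ← ofReal_integral_eq_lintegral_ofReal (integrable_g μ t d hd)
      (Filter.Eventually.of_forall fun b => (Real.exp_pos _).le)]

lemma tilt_eq (μ : Measure ℝ) [IsProbabilityMeasure μ] (t d : ℝ) (hd : 0 < d) :
    tiltLQ μ t d = (ENNReal.ofReal (∫ b, Real.exp (t * b - d * b ^ 2 / 2) ∂μ))⁻¹ •
      μ.withDensity fun b => ENNReal.ofReal (Real.exp (t * b - d * b ^ 2 / 2)) := by
  rw [tiltLQ, mass_eq μ t d hd]

lemma integral_tilt (μ : Measure ℝ) [IsProbabilityMeasure μ] (t d : ℝ) (hd : 0 < d)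
    (f : ℝ → ℝ) :
    ∫ x, f x ∂(tiltLQ μ t d) =
      (∫ b, Real.exp (t * b - d * b ^ 2 / 2) ∂μ)⁻¹ *
        ∫ b, f b * Real.exp (t * b - d * b ^ 2 / 2) ∂μ := by
  rw [tilt_eq μ t d hd, integral_smul_measure]
  have h1 : (μ.withDensity fun b => ENNReal.ofReal (Real.exp (t * b - d * b ^ 2 / 2)))
      = μ.withDensity fun b => ((Real.toNNReal (Real.exp (t * b - d * b ^ 2 / 2))) : ℝ≥0∞) := rfl
  rw [h1, integral_withDensity_eq_integral_smul (by fun_prop) f]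
  rw [ENNReal.toReal_inv, ENNReal.toReal_ofReal (Z_pos μ t d hd).le]
  rw [smul_eq_mul]
  congr 1
  apply integral_congr_ae
  filter_upwards with b
  rw [NNReal.smul_def, smul_eq_mul, Real.coe_toNNReal _ (Real.exp_pos _).le, mul_comm]

lemma integrable_tilt_iff (μ : Measure ℝ) [IsProbabilityMeasure μ] (t d : ℝ) (hd : 0 < d)
    (f : ℝ → ℝ) :
    Integrable f (tiltLQ μ t d) ↔
      Integrable (fun b => f b * Real.exp (t * b - d * b ^ 2 / 2)) μ := by
  rw [tilt_eq μ t d hd]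
  have hZ := Z_pos μ t d hd
  rw [integrable_smul_measure (c := ((ENNReal.ofReal (∫ b, Real.exp (t * b - d * b ^ 2 / 2) ∂μ)))⁻¹)
    (by simp) (by simp [ENNReal.ofReal_eq_zero, not_le, hZ])]
  have h1 : (μ.withDensity fun b => ENNReal.ofReal (Real.exp (t * b - d * b ^ 2 / 2)))
      = μ.withDensity fun b => ((Real.toNNReal (Real.exp (t * b - d * b ^ 2 / 2))) : ℝ≥0∞) := rfl
  rw [h1]
  have h2 := integrable_withDensity_iff_integrable_smul
    (μ := μ) (f := fun b => (Real.exp (t * b - d * b ^ 2 / 2)).toNNReal)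
    (by fun_prop) (g := f)
  rw [h2]
  constructor <;> intro h <;>
  · refine h.congr ?_
    filter_upwards with b
    rw [NNReal.smul_def, smul_eq_mul, Real.coe_toNNReal _ (Real.exp_pos _).le, mul_comm]

lemma tilt_prob (μ : Measure ℝ) [IsProbabilityMeasure μ] (t d : ℝ) (hd : 0 < d) :
    IsProbabilityMeasure (tiltLQ μ t d) := by
  constructor
  rw [tilt_eq μ t d hd, Measure.smul_apply, smul_eq_mul, mass_eq μ t d hd,
    ENNReal.inv_mul_cancel (by simp [Z_pos μ t d hd]) (by simp)]

lemma exp_mul_g (s t d b : ℝ) :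
    Real.exp (s * b) * Real.exp (t * b - d * b ^ 2 / 2)
      = Real.exp ((t + s) * b - d * b ^ 2 / 2) := by
  rw [← Real.exp_add]; ring_nf

lemma integrable_exp_tilt (μ : Measure ℝ) [IsProbabilityMeasure μ] (t d s : ℝ) (hd : 0 < d) :
    Integrable (fun x => Real.exp (s * x)) (tiltLQ μ t d) := by
  rw [integrable_tilt_iff μ t d hd]
  have : (fun b => Real.exp (s * b) * Real.exp (t * b - d * b ^ 2 / 2))
      = fun b => Real.exp ((t + s) * b - d * b ^ 2 / 2) := by
    funext b; exact exp_mul_g s t d b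
  rw [this]
  exact integrable_g μ (t + s) d hd

lemma integral_exp_tilt (μ : Measure ℝ) [IsProbabilityMeasure μ] (t d s : ℝ) (hd : 0 < d) :
    ∫ x, Real.exp (s * x) ∂(tiltLQ μ t d)
      = (∫ b, Real.exp (t * b - d * b ^ 2 / 2) ∂μ)⁻¹ *
          ∫ b, Real.exp ((t + s) * b - d * b ^ 2 / 2) ∂μ := by
  rw [integral_tilt μ t d hd]
  congr 1
  apply integral_congr_ae
  filter_upwards with b
  exact exp_mul_g s t d b

lemma integrable_id_tilt (μ : Measure ℝ) [IsProbabilityMeasure μ] (t d : ℝ) (hd : 0 < d) :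
    Integrable (fun x : ℝ => x) (tiltLQ μ t d) := by
  refine ((integrable_exp_tilt μ t d 1 hd).add (integrable_exp_tilt μ t d (-1) hd)).mono'
    aestronglyMeasurable_id ?_
  filter_upwards with x
  rw [Real.norm_eq_abs]
  simp only [Pi.add_apply]
  rcases abs_cases x with ⟨h, _⟩ | ⟨h, _⟩ <;>
  · rw [h]
    have h1 := Real.add_one_le_exp (1 * x)
    have h2 := Real.add_one_le_exp ((-1) * x)
    have := (Real.exp_pos (1 * x)).le
    have := (Real.exp_pos ((-1) * x)).le
    nlinarith

lemma tangent_jensen (ν : Measure ℝ) [IsProbabilityMeasure ν] (s : ℝ)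
    (hexp : Integrable (fun x => Real.exp (s * x)) ν)
    (hid : Integrable (fun x : ℝ => x) ν) :
    Real.exp (s * ∫ x, x ∂ν) ≤ ∫ x, Real.exp (s * x) ∂ν := by
  set m := ∫ x, x ∂ν with hm
  have hInt2 : Integrable (fun x => Real.exp (s * m) * (1 + s * (x - m))) ν := by
    exact (((integrable_const (1:ℝ)).add
      ((hid.sub (integrable_const m)).const_mul s)).const_mul _)
  have key : ∀ x : ℝ, Real.exp (s * m) * (1 + s * (x - m)) ≤ Real.exp (s * x) := by
    intro x
    have h1 := Real.add_one_le_exp (s * (x - m))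
    have h2 : Real.exp (s * m) * Real.exp (s * (x - m)) = Real.exp (s * x) := by
      rw [← Real.exp_add]; ring_nf
    nlinarith [(Real.exp_pos (s * m)).le, Real.exp_pos (s * (x-m))]
  have hlin : Integrable (fun x : ℝ => s * (x - m)) ν :=
    (hid.sub (integrable_const m)).const_mul s
  calc Real.exp (s * m) = ∫ x, Real.exp (s * m) * (1 + s * (x - m)) ∂ν := by
        rw [integral_const_mul]
        have h3 : ∫ x, (1 + s * (x - m)) ∂ν = 1 := by
          rw [integral_add (integrable_const _) hlin, integral_const_mul,
            integral_sub hid (integrable_const m)]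
          simp [← hm]
        rw [h3, mul_one]
    _ ≤ ∫ x, Real.exp (s * x) ∂ν := integral_mono hInt2 hexp key

lemma rpow_le_rr_exp (r u : ℝ) (hr : 0 < r) (hu : 0 ≤ u) :
    u ^ r ≤ r ^ r * Real.exp u := by
  rcases eq_or_lt_of_le hu with h | h
  · rw [← h, Real.zero_rpow hr.ne']
    positivity
  · have hlog : Real.log u ≤ Real.log r + u / r := by
      have h1 : Real.log (u / r) ≤ u / r - 1 := Real.log_le_sub_one_of_pos (by positivity)
      rw [Real.log_div h.ne' hr.ne'] at h1
      linarith
    calc u ^ r = Real.exp (r * Real.log u) := by rw [Real.rpow_def_of_pos h, mul_comm]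
      _ ≤ Real.exp (r * (Real.log r + u / r)) := by
          apply Real.exp_le_exp.mpr
          exact mul_le_mul_of_nonneg_left hlog hr.le
      _ = r ^ r * Real.exp u := by
          rw [Real.rpow_def_of_pos hr, ← Real.exp_add]
          congr 1
          field_simp
  
lemma add_rpow_le (a b r : ℝ) (ha : 0 ≤ a) (hb : 0 ≤ b) (hr : 0 ≤ r) :
    (a + b) ^ r ≤ 2 ^ r * (a ^ r + b ^ r) := by
  rcases le_total a b with h | h
  · calc (a + b) ^ r ≤ (2 * b) ^ r := by
          apply Real.rpow_le_rpow (by linarith) (by linarith) hr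
      _ = 2 ^ r * b ^ r := Real.mul_rpow (by norm_num) hb
      _ ≤ 2 ^ r * (a ^ r + b ^ r) := by
          have : (0:ℝ) ≤ a ^ r := Real.rpow_nonneg ha r
          nlinarith [Real.rpow_nonneg (by norm_num : (0:ℝ) ≤ 2) r]
  · calc (a + b) ^ r ≤ (2 * a) ^ r := by
          apply Real.rpow_le_rpow (by linarith) (by linarith) hr
      _ = 2 ^ r * a ^ r := Real.mul_rpow (by norm_num) ha
      _ ≤ 2 ^ r * (a ^ r + b ^ r) := by
          have : (0:ℝ) ≤ b ^ r := Real.rpow_nonneg hb r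
          nlinarith [Real.rpow_nonneg (by norm_num : (0:ℝ) ≤ 2) r]

set_option maxHeartbeats 2000000 in
/-- **Growth bounds for linear-quadratic tilts.**
If the tilts of `μ` have uniformly bounded means at `t = 0` and sub-Gaussian norms growing
at most linearly in `t`, for `d` in a neighborhood of `d0`, then (i) the log-normalizing
constant grows at most like `|t|⁴`; and (ii) all absolute moments of `B_{t,d}(μ)` of order
`r` grow at most like `|t|^{3r}`. -/
theorem stmt_8 (μ : Measure ℝ) (hμ : IsProbabilityMeasure μ)
    (d0 eps C : ℝ) (hd0 : 0 < d0) (heps : 0 < eps) (hepsle : eps < d0 / 2) (hC : 0 < C)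
    (hmean : ∀ d ∈ Set.Ioo (d0 - eps) (d0 + eps), |∫ b, b ∂(tiltLQ μ 0 d)| ≤ C)
    (hsub : ∀ d ∈ Set.Ioo (d0 - eps) (d0 + eps), ∀ t : ℝ,
      SubGaussianNormLE (tiltLQ μ t d) (C * (1 + |t|))) :
    (∃ K : ℝ, 0 < K ∧ ∀ t : ℝ, ∀ d ∈ Set.Ioo (d0 - eps) (d0 + eps),
      Real.log (∫ b, Real.exp (t * b - d * b ^ 2 / 2) ∂μ) ≤ K * (1 + |t| ^ (4 : ℕ))) ∧
    (∀ r : ℝ, 0 < r → ∃ Kr : ℝ, 0 < Kr ∧ ∀ t : ℝ, ∀ d ∈ Set.Ioo (d0 - eps) (d0 + eps),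
      ∫ b, |b| ^ r ∂(tiltLQ μ t d) ≤ Kr * (1 + |t| ^ (3 * r))) := by
  haveI := hμ
  have hde : 0 < d0 - eps := by linarith
  obtain ⟨A, hAdef⟩ : ∃ A : ℝ, A = (2 * (d0 - eps))⁻¹ := ⟨_, rfl⟩
  have hA : 0 < A := by rw [hAdef]; positivity
  -- the universal constant c0
  have hc0 : 0 < ∫ b, Real.exp (0 * b - (d0 + eps) * b ^ 2 / 2) ∂μ :=
    Z_pos μ 0 (d0 + eps) (by linarith)

  obtain ⟨c0, hc0def⟩ : ∃ c0 : ℝ, c0 = ∫ b, Real.exp (0 * b - (d0 + eps) * b ^ 2 / 2) ∂μ := ⟨_, rfl⟩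
  rw [← hc0def] at hc0
  obtain ⟨B, hBdef⟩ : ∃ B : ℝ, B = 4 * A + C + |Real.log c0| := ⟨_, rfl⟩
  have hB : 0 < B := by rw [hBdef]; positivity
  -- lower bound on partition function, valid for all t, d in range
  have hZlow : ∀ t : ℝ, ∀ d ∈ Set.Ioo (d0 - eps) (d0 + eps),
      c0 * Real.exp (-(C * |t|)) ≤ ∫ b, Real.exp (t * b - d * b ^ 2 / 2) ∂μ := by
    intro t d hd
    have hdpos : 0 < d := by have := hd.1; linarith
    have hZ0pos := Z_pos μ 0 d hdpos
    have hZ0low : c0 ≤ ∫ b, Real.exp (0 * b - d * b ^ 2 / 2) ∂μ := by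
      rw [hc0def]
      refine integral_mono (integrable_g μ 0 (d0 + eps) (by linarith)) (integrable_g μ 0 d hdpos)
        fun b => Real.exp_le_exp.mpr ?_
      have hb := sq_nonneg b
      have := hd.2.le
      nlinarith
    haveI := tilt_prob μ 0 d hdpos
    have hj := tangent_jensen (tiltLQ μ 0 d) t (integrable_exp_tilt μ 0 d t hdpos)
      (integrable_id_tilt μ 0 d hdpos)
    rw [integral_exp_tilt μ 0 d t hdpos, zero_add] at hj
    obtain ⟨m0, hm0def⟩ : ∃ m0 : ℝ, m0 = ∫ x, x ∂(tiltLQ μ 0 d) := ⟨_, rfl⟩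
    rw [← hm0def] at hj
    have hm0 : |m0| ≤ C := by rw [hm0def]; exact hmean d hd
    have h1 : -(C * |t|) ≤ t * m0 := by
      have h2 : |t * m0| ≤ |t| * C := by
        rw [abs_mul]
        exact mul_le_mul_of_nonneg_left hm0 (abs_nonneg t)
      have := neg_abs_le (t * m0)
      nlinarith
    calc c0 * Real.exp (-(C * |t|)) ≤ (∫ b, Real.exp (0 * b - d * b ^ 2 / 2) ∂μ)
          * Real.exp (t * m0) := by
          exact mul_le_mul hZ0low (Real.exp_le_exp.mpr h1) (Real.exp_pos _).le
            (le_of_lt hZ0pos)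
      _ ≤ ∫ b, Real.exp (t * b - d * b ^ 2 / 2) ∂μ := by
          have h3 := mul_le_mul_of_nonneg_left hj hZ0pos.le
          rwa [← mul_assoc, mul_inv_cancel₀ hZ0pos.ne', one_mul] at h3
  -- mean bound
  have hmeanb : ∀ t : ℝ, ∀ d ∈ Set.Ioo (d0 - eps) (d0 + eps),
      |∫ x, x ∂(tiltLQ μ t d)| ≤ B * (1 + |t|) := by
    intro t d hd
    have hdpos : 0 < d := by have := hd.1; linarith
    have hZpos := Z_pos μ t d hdpos
    have hZlow' := hZlow t d hd
    haveI := tilt_prob μ t d hdpos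
    obtain ⟨m, hmdef⟩ : ∃ m : ℝ, m = ∫ x, x ∂(tiltLQ μ t d) := ⟨_, rfl⟩
    rw [← hmdef]
    have hsm : ∀ s : ℝ, s * m ≤ A * (t + s) ^ 2 + C * |t| - Real.log c0 := by
      intro s
      have hj := tangent_jensen (tiltLQ μ t d) s (integrable_exp_tilt μ t d s hdpos)
        (integrable_id_tilt μ t d hdpos)
      rw [integral_exp_tilt μ t d s hdpos] at hj
      rw [← hmdef] at hj
      have hZts : ∫ b, Real.exp ((t + s) * b - d * b ^ 2 / 2) ∂μ
          ≤ Real.exp ((t + s) ^ 2 / (2 * d)) := Z_le μ (t + s) d hdpos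
      have hstep : Real.exp (s * m) ≤ (c0 * Real.exp (-(C * |t|)))⁻¹
          * Real.exp ((t + s) ^ 2 / (2 * d)) := by
        calc Real.exp (s * m)
            ≤ (∫ b, Real.exp (t * b - d * b ^ 2 / 2) ∂μ)⁻¹
              * ∫ b, Real.exp ((t + s) * b - d * b ^ 2 / 2) ∂μ := hj
          _ ≤ (c0 * Real.exp (-(C * |t|)))⁻¹ * Real.exp ((t + s) ^ 2 / (2 * d)) := by
              apply mul_le_mul
              · exact inv_anti₀ (by positivity) hZlow'
              · exact hZts
              · exact le_of_lt (Z_pos μ (t + s) d hdpos)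
              · positivity
      have hlog := Real.log_le_log (Real.exp_pos _) hstep
      rw [Real.log_exp, Real.log_mul (by positivity) (Real.exp_pos _).ne',
        Real.log_inv, Real.log_mul hc0.ne' (Real.exp_pos _).ne', Real.log_exp,
        Real.log_exp] at hlog
      have hdd : (t + s) ^ 2 / (2 * d) ≤ A * (t + s) ^ 2 := by
        rw [hAdef, inv_mul_eq_div]
        apply div_le_div_of_nonneg_left (sq_nonneg _) (by positivity)
        have := hd.1; linarith
      linarith
    have h1 := hsm (1 + |t|)
    have h2 := hsm (-(1 + |t|))
    have habs1 := le_abs_self t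
    have habs2 := neg_abs_le t
    have habs0 := abs_nonneg t
    have hsq1 : (t + (1 + |t|)) ^ 2 ≤ 4 * (1 + |t|) ^ 2 := by nlinarith
    have hsq2 : (t + -(1 + |t|)) ^ 2 ≤ 4 * (1 + |t|) ^ 2 := by nlinarith
    have hlabs1 := le_abs_self (Real.log c0)
    have hlabs2 := neg_abs_le (Real.log c0)
    have h1t : (0:ℝ) < 1 + |t| := by linarith
    have key : ∀ x : ℝ, (1 + |t|) * x ≤ A * 4 * (1 + |t|) ^ 2 + C * |t| - Real.log c0 →
        x ≤ B * (1 + |t|) := by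
      intro x hx
      have e1 : (1:ℝ) ≤ (1 + |t|) ^ 2 := by nlinarith
      have e2 : |t| ≤ (1 + |t|) ^ 2 := by nlinarith
      have e3 := mul_le_mul_of_nonneg_left e1 (abs_nonneg (Real.log c0))
      have e4 := mul_le_mul_of_nonneg_left e2 hC.le
      have hRHS : A * 4 * (1 + |t|) ^ 2 + C * |t| - Real.log c0
          ≤ (1 + |t|) * (B * (1 + |t|)) := by
        rw [hBdef]; ring_nf; ring_nf at e3 e4; nlinarith
      exact le_of_mul_le_mul_left (hx.trans hRHS) h1t
    have hk1 : m ≤ B * (1 + |t|) := by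
      apply key
      have := mul_le_mul_of_nonneg_left hsq1 hA.le
      linarith
    have hk2 : -m ≤ B * (1 + |t|) := by
      apply key
      have := mul_le_mul_of_nonneg_left hsq2 hA.le
      nlinarith
    rw [abs_le]
    exact ⟨by linarith, hk1⟩
  constructor
  · -- part (i)
    refine ⟨A, hA, fun t d hd => ?_⟩
    have hdpos : 0 < d := by have := hd.1; linarith
    have habs4 : |t| ^ (4 : ℕ) = t ^ 4 := by
      rw [← abs_pow]
      exact abs_of_nonneg (by positivity)
    have h1 : Real.log (∫ b, Real.exp (t * b - d * b ^ 2 / 2) ∂μ) ≤ t ^ 2 / (2 * d) := by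
      rw [Real.log_le_iff_le_exp (Z_pos μ t d hdpos)]
      exact Z_le μ t d hdpos
    have h2 : t ^ 2 / (2 * d) ≤ A * t ^ 2 := by
      rw [hAdef, inv_mul_eq_div]
      apply div_le_div_of_nonneg_left (sq_nonneg _) (by positivity)
      have := hd.1; linarith
    have h3 : t ^ 2 ≤ 1 + t ^ 4 := by nlinarith [sq_nonneg (t ^ 2 - 1)]
    rw [habs4]
    nlinarith
  · -- part (ii)
    intro r hr
    obtain ⟨D, hDdef⟩ : ∃ D : ℝ, D = 2 ^ r * (B ^ r + r ^ r * C ^ r * (2 * Real.exp (1 / 2))) := ⟨_, rfl⟩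
    have hD : 0 < D := by rw [hDdef]; positivity
    refine ⟨D * 2 ^ (3 * r), by positivity, fun t d hd => ?_⟩
    have hdpos : 0 < d := by have := hd.1; linarith
    haveI := tilt_prob μ t d hdpos
    set ν := tiltLQ μ t d with hνdef
    obtain ⟨m, hmdef⟩ : ∃ m : ℝ, m = ∫ x, x ∂ν := ⟨_, rfl⟩
    have hm : |m| ≤ B * (1 + |t|) := by rw [hmdef]; exact hmeanb t d hd
    obtain ⟨K, hKdef⟩ : ∃ K : ℝ, K = C * (1 + |t|) := ⟨_, rfl⟩
    have hK : 0 < K := by rw [hKdef]; positivity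
    have h1t : (0:ℝ) ≤ 1 + |t| := by positivity
    have hsubG := hsub d hd t
    rw [← hKdef] at hsubG
    -- integrability of the exponential comparison function
    have hGi : ∀ s : ℝ, Integrable (fun x => Real.exp (s * (x - m))) ν := by
      intro s
      have heq : (fun x => Real.exp (s * (x - m)))
          = fun x => Real.exp (-(s * m)) * Real.exp (s * x) := by
        funext x; rw [← Real.exp_add]; ring_nf
      rw [heq]
      exact (integrable_exp_tilt μ t d s hdpos).const_mul _
    have hGint : Integrable (fun x => Real.exp (K⁻¹ * (x - m)) + Real.exp (-K⁻¹ * (x - m))) ν :=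
      (hGi K⁻¹).add (hGi (-K⁻¹))
    have hKsq : ∀ s : ℝ, s = K⁻¹ ∨ s = -K⁻¹ → K ^ 2 * s ^ 2 / 2 = 1 / 2 := by
      intro s hs
      rcases hs with h | h <;> · rw [h]; field_simp
    have hGle : ∫ x, (Real.exp (K⁻¹ * (x - m)) + Real.exp (-K⁻¹ * (x - m))) ∂ν
        ≤ 2 * Real.exp (1 / 2) := by
      rw [integral_add (hGi K⁻¹) (hGi (-K⁻¹))]
      have e1 := hsubG K⁻¹
      have e2 := hsubG (-K⁻¹)
      rw [hKsq K⁻¹ (Or.inl rfl)] at e1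
      rw [hKsq (-K⁻¹) (Or.inr rfl)] at e2
      rw [← hmdef] at e1 e2
      linarith
    -- pointwise bound
    have hpt : ∀ x : ℝ, |x| ^ r ≤ 2 ^ r * |m| ^ r
        + 2 ^ r * r ^ r * K ^ r * (Real.exp (K⁻¹ * (x - m)) + Real.exp (-K⁻¹ * (x - m))) := by
      intro x
      have step1 : |x| ^ r ≤ (|m| + |x - m|) ^ r := by
        apply Real.rpow_le_rpow (abs_nonneg x) ?_ hr.le
        calc |x| = |m + (x - m)| := by ring_nf
          _ ≤ |m| + |x - m| := abs_add_le m (x - m)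
      have step2 : (|m| + |x - m|) ^ r ≤ 2 ^ r * (|m| ^ r + |x - m| ^ r) :=
        add_rpow_le _ _ r (abs_nonneg m) (abs_nonneg _) hr.le
      have step3 : |x - m| ^ r ≤ r ^ r * K ^ r *
          (Real.exp (K⁻¹ * (x - m)) + Real.exp (-K⁻¹ * (x - m))) := by
        have hu : (0:ℝ) ≤ K⁻¹ * |x - m| := by positivity
        have he : |x - m| ^ r = K ^ r * (K⁻¹ * |x - m|) ^ r := by
          rw [← Real.mul_rpow hK.le hu]
          congr 1
          field_simp
        rw [he]
        have h4 := rpow_le_rr_exp r (K⁻¹ * |x - m|) hr hu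
        have h5 : Real.exp (K⁻¹ * |x - m|)
            ≤ Real.exp (K⁻¹ * (x - m)) + Real.exp (-K⁻¹ * (x - m)) := by
          rcases abs_cases (x - m) with ⟨h, _⟩ | ⟨h, _⟩ <;> rw [h]
          · nlinarith [Real.exp_pos (-K⁻¹ * (x - m)), le_refl (Real.exp (K⁻¹ * (x-m)))]
          · have : K⁻¹ * -(x - m) = -K⁻¹ * (x - m) := by ring
            rw [this]
            nlinarith [Real.exp_pos (K⁻¹ * (x - m))]
        have hKr : (0:ℝ) ≤ K ^ r := Real.rpow_nonneg hK.le r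
        calc K ^ r * (K⁻¹ * |x - m|) ^ r ≤ K ^ r * (r ^ r * Real.exp (K⁻¹ * |x - m|)) :=
              mul_le_mul_of_nonneg_left h4 hKr
          _ ≤ K ^ r * (r ^ r * (Real.exp (K⁻¹ * (x - m)) + Real.exp (-K⁻¹ * (x - m)))) := by
              apply mul_le_mul_of_nonneg_left _ hKr
              exact mul_le_mul_of_nonneg_left h5 (Real.rpow_nonneg hr.le r)
          _ = r ^ r * K ^ r * (Real.exp (K⁻¹ * (x - m)) + Real.exp (-K⁻¹ * (x - m))) := by ring
      have h2r : (0:ℝ) ≤ 2 ^ r := Real.rpow_nonneg (by norm_num) r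
      nlinarith [mul_le_mul_of_nonneg_left step3 h2r]
    -- integrability of |x|^r
    have hmeas : AEStronglyMeasurable (fun x : ℝ => |x| ^ r) ν := by
      apply Measurable.aestronglyMeasurable
      fun_prop
    have hbound_int : Integrable (fun x => 2 ^ r * |m| ^ r
        + 2 ^ r * r ^ r * K ^ r * (Real.exp (K⁻¹ * (x - m)) + Real.exp (-K⁻¹ * (x - m)))) ν :=
      (integrable_const _).add (hGint.const_mul _)
    have hint : Integrable (fun x : ℝ => |x| ^ r) ν := by
      refine hbound_int.mono' hmeas ?_
      filter_upwards with x
      rw [Real.norm_eq_abs, abs_of_nonneg (Real.rpow_nonneg (abs_nonneg x) r)]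
      exact hpt x
    have hfinal : ∫ x, |x| ^ r ∂ν ≤ 2 ^ r * |m| ^ r
        + 2 ^ r * r ^ r * K ^ r * (2 * Real.exp (1 / 2)) := by
      calc ∫ x, |x| ^ r ∂ν ≤ ∫ x, (2 ^ r * |m| ^ r
          + 2 ^ r * r ^ r * K ^ r * (Real.exp (K⁻¹ * (x - m)) + Real.exp (-K⁻¹ * (x - m)))) ∂ν :=
            integral_mono hint hbound_int hpt
        _ = 2 ^ r * |m| ^ r + 2 ^ r * r ^ r * K ^ r
            * ∫ x, (Real.exp (K⁻¹ * (x - m)) + Real.exp (-K⁻¹ * (x - m))) ∂ν := by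
            rw [integral_add (integrable_const _) (hGint.const_mul _), integral_const,
              integral_const_mul]
            simp
        _ ≤ 2 ^ r * |m| ^ r + 2 ^ r * r ^ r * K ^ r * (2 * Real.exp (1 / 2)) := by
            have : (0:ℝ) ≤ 2 ^ r * r ^ r * K ^ r := by positivity
            nlinarith
    -- assemble growth bound
    have hmr : |m| ^ r ≤ B ^ r * (1 + |t|) ^ r := by
      rw [← Real.mul_rpow hB.le h1t]
      exact Real.rpow_le_rpow (abs_nonneg m) hm hr.le
    have hKr : K ^ r = C ^ r * (1 + |t|) ^ r := by
      rw [hKdef]; exact Real.mul_rpow hC.le h1t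
    have hD1 : ∫ x, |x| ^ r ∂ν ≤ D * (1 + |t|) ^ r := by
      rw [hDdef]
      calc ∫ x, |x| ^ r ∂ν ≤ 2 ^ r * |m| ^ r + 2 ^ r * r ^ r * K ^ r * (2 * Real.exp (1 / 2)) :=
            hfinal
        _ ≤ 2 ^ r * (B ^ r * (1 + |t|) ^ r)
            + 2 ^ r * r ^ r * (C ^ r * (1 + |t|) ^ r) * (2 * Real.exp (1 / 2)) := by
            rw [← hKr]
            have h2r : (0:ℝ) ≤ 2 ^ r := Real.rpow_nonneg (by norm_num) r
            have := mul_le_mul_of_nonneg_left hmr h2r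
            nlinarith
        _ = 2 ^ r * (B ^ r + r ^ r * C ^ r * (2 * Real.exp (1 / 2))) * (1 + |t|) ^ r := by ring
    have hexp3 : (1 + |t|) ^ r ≤ (1 + |t|) ^ (3 * r) :=
      Real.rpow_le_rpow_of_exponent_le (by linarith [abs_nonneg t]) (by linarith)
    have hsplit : (1 + |t|) ^ (3 * r) ≤ 2 ^ (3 * r) * (1 + |t| ^ (3 * r)) := by
      have := add_rpow_le 1 |t| (3 * r) (by norm_num) (abs_nonneg t) (by linarith)
      rwa [Real.one_rpow] at this
    calc ∫ x, |x| ^ r ∂ν ≤ D * (1 + |t|) ^ r := hD1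
      _ ≤ D * (1 + |t|) ^ (3 * r) := mul_le_mul_of_nonneg_left hexp3 hD.le
      _ ≤ D * (2 ^ (3 * r) * (1 + |t| ^ (3 * r))) := mul_le_mul_of_nonneg_left hsplit hD.le
      _ = D * 2 ^ (3 * r) * (1 + |t| ^ (3 * r)) := by ring
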